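/- Let a₁, a₂, b₁, b₂ > 0 and define θ* ∈ [0,π] as follows: θ* = 0 if |a₂ − b₂| > a₁ + b₁; θ* = π if |a₁ − b₁| > a₂ + b₂; and otherwise θ* = arccos( (a₂² + b₂² − a₁² − b₁²) / (2(a₁b₁ + a₂b₂)) ). Then ∫₀^{2π} ∫₀^{2π} ln | a₁ + b₁ e^{iθ} + (b₂ − a₂ e^{iθ}) e^{iφ} | dφ dθ = 4π² ln( (a₁ + b₁ + |a₁ − b₁|)/2 ) + 2π ∫_{−π+θ*}^{π−θ*} ( ln | b₂ + a₂ e^{iθ} | − ln | a₁ − b₁ e^{iθ} | ) dθ. (Note (a₁ + b₁ + |a₁ − b₁|)/2 = max(a₁, b₁), and the integrand of the last integral is nonnegative on the domain of integration.) -/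

import Mathlib

open Real

/-- The angle `θ*` of Appendix D: `θ* = 0` if `|a₂ − b₂| > a₁ + b₁`,
`θ* = π` if `|a₁ − b₁| > a₂ + b₂`, and otherwise
`θ* = arccos((a₂² + b₂² − a₁² − b₁²)/(2(a₁b₁ + a₂b₂)))`. -/
noncomputable def thetaStar (a₁ a₂ b₁ b₂ : ℝ) : ℝ :=
  if |a₂ - b₂| > a₁ + b₁ then 0
  else if |a₁ - b₁| > a₂ + b₂ then Real.pi
  else Real.arccos ((a₂ ^ 2 + b₂ ^ 2 - a₁ ^ 2 - b₁ ^ 2) / (2 * (a₁ * b₁ + a₂ * b₂)))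

open MeasureTheory Set intervalIntegral

noncomputable section

noncomputable def Complex.abs : AbsoluteValue ℂ ℝ := NormedField.toAbsoluteValue ℂ

lemma Complex.abs_def' (z : ℂ) : Complex.abs z = ‖z‖ := rfl

lemma Complex.abs_apply (z : ℂ) : Complex.abs z = Real.sqrt (Complex.normSq z) := Complex.norm_def z

lemma Complex.sq_abs (z : ℂ) : Complex.abs z ^ 2 = Complex.normSq z := Complex.sq_norm z

lemma Complex.abs_exp_ofReal_mul_I (x : ℝ) : Complex.abs (Complex.exp (x * Complex.I)) = 1 :=
  Complex.norm_exp_ofReal_mul_I x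

lemma Complex.abs_mul_exp_arg_mul_I (x : ℂ) :
    (Complex.abs x : ℂ) * Complex.exp (x.arg * Complex.I) = x :=
  Complex.norm_mul_exp_arg_mul_I x

lemma Complex.abs_re_le_abs (z : ℂ) : |z.re| ≤ Complex.abs z := Complex.abs_re_le_norm z

lemma Complex.abs_conj (z : ℂ) : Complex.abs ((starRingEnd ℂ) z) = Complex.abs z :=
  Complex.norm_conj z

lemma Complex.abs_ofReal (r : ℝ) : Complex.abs (r : ℂ) = |r| := Complex.norm_real r

lemma Complex.continuous_abs : Continuous Complex.abs := continuous_norm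



lemma log_int01 : IntervalIntegrable Real.log volume 0 1 := by
  have h : IntegrableOn (fun x : ℝ => -Real.log x) (Ioc (0:ℝ) 1) := by
    apply integrableOn_deriv_of_nonneg (g := fun x => x - x * Real.log x)
    · exact (continuous_id.sub Real.continuous_mul_log).continuousOn
    · intro x hx
      have h1 : HasDerivAt (fun y : ℝ => y * Real.log y) (Real.log x + 1) x :=
        Real.hasDerivAt_mul_log (ne_of_gt hx.1)
      have h2 := (hasDerivAt_id x).sub h1
      exact h2.congr_deriv (by ring)
    · intro x hx
      simp only [neg_nonneg]
      exact Real.log_nonpos hx.1.le hx.2.le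
  have h2 : IntegrableOn Real.log (Ioc (0:ℝ) 1) := by
    exact h.neg.congr (Filter.Eventually.of_forall fun x => by simp)
  rw [intervalIntegrable_iff_integrableOn_Ioc_of_le zero_le_one]
  exact h2

lemma log_int_nonneg {b : ℝ} (hb : 0 ≤ b) : IntervalIntegrable Real.log volume 0 b := by
  rcases le_total b 1 with h1 | h1
  · exact log_int01.mono_set (uIcc_subset_uIcc_iff_le.2 (by simp [hb, h1]))
  · exact log_int01.trans (intervalIntegrable_log (by
      rw [Set.mem_uIcc]; push_neg
      exact ⟨fun h => by linarith, fun h => by linarith⟩))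

lemma log_int (a b : ℝ) : IntervalIntegrable Real.log volume a b := by
  have key : ∀ c : ℝ, IntervalIntegrable Real.log volume 0 c := by
    intro c
    rcases le_total 0 c with hc | hc
    · exact log_int_nonneg hc
    · have h := log_int_nonneg (neg_nonneg.2 hc)
      have h2 := (IntervalIntegrable.iff_comp_neg (by finiteness)).mp h
      simp only [neg_zero, neg_neg] at h2
      have : (fun x : ℝ => Real.log (-x)) = Real.log := by
        ext x; exact Real.log_neg_eq_log x
      rwa [this] at h2
  exact (key a).symm.trans (key b)




lemma logsin_meas : Measurable (fun x : ℝ => Real.log |Real.sin x|) :=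
  Real.measurable_log.comp (measurable_abs.comp Real.measurable_sin)

lemma logsin_int_half : IntervalIntegrable (fun x : ℝ => Real.log |Real.sin x|) volume 0 (π/2) := by
  have hb : IntervalIntegrable (fun x : ℝ => Real.log π - Real.log x) volume 0 (π/2) :=
    (_root_.intervalIntegrable_const).sub (log_int 0 (π/2))
  apply hb.mono_fun' (logsin_meas.aestronglyMeasurable)
  rw [uIoc_of_le (by positivity : (0:ℝ) ≤ π/2)]
  refine (ae_restrict_iff' measurableSet_Ioc).2 (Filter.Eventually.of_forall fun x hx => ?_)
  have hx0 : 0 < x := hx.1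
  have hx2 : x ≤ π/2 := hx.2
  have hs : 2/π * x ≤ Real.sin x := Real.mul_le_sin hx0.le hx2
  have hs0 : 0 < Real.sin x := lt_of_lt_of_le (by positivity) hs
  have hsle : Real.sin x ≤ 1 := Real.sin_le_one x
  have h1 : Real.log |Real.sin x| = Real.log (Real.sin x) := by rw [abs_of_pos hs0]
  have h2 : Real.log (Real.sin x) ≤ 0 := Real.log_nonpos hs0.le hsle
  have h3 : Real.log (2/π * x) ≤ Real.log (Real.sin x) := Real.log_le_log (by positivity) hs
  have h4 : Real.log (2/π * x) = Real.log 2 - Real.log π + Real.log x := by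
    rw [Real.log_mul (by positivity) (ne_of_gt hx0), Real.log_div (by norm_num) (by positivity)]
  simp only [Real.norm_eq_abs]
  rw [h1, abs_of_nonpos h2]
  have hlog2 : 0 ≤ Real.log 2 := Real.log_nonneg (by norm_num)
  linarith

lemma logsin_int_0pi : IntervalIntegrable (fun x : ℝ => Real.log |Real.sin x|) volume 0 π := by
  have h2 : IntervalIntegrable (fun x : ℝ => Real.log |Real.sin x|) volume (π/2) π := by
    have := (logsin_int_half.comp_sub_left π)
    simp only [Real.sin_pi_sub] at this
    have heq : π - 0 = π := by ring
    have heq2 : π - π/2 = π/2 := by ring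
    rw [heq, heq2] at this
    exact this.symm
  have := logsin_int_half.trans h2
  exact this

lemma logsinhalf_int : IntervalIntegrable (fun θ : ℝ => Real.log |Real.sin (θ/2)|) volume 0 (2*π) := by
  have := logsin_int_0pi.comp_mul_left (c := 1/2)
  simp only [one_div] at this ⊢
  have h1 : (0:ℝ)/(2⁻¹ : ℝ) = 0 := by norm_num
  have h2 : π/((2:ℝ)⁻¹ : ℝ) = 2*π := by ring
  rw [h1, h2] at this
  convert this using 2 with θ
  rw [inv_mul_eq_div]





/-- |1 - e^{iθ}| = 2|sin(θ/2)| -/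
lemma abs_one_sub_exp (θ : ℝ) :
    Complex.abs (1 - Complex.exp (θ * Complex.I)) = 2 * |Real.sin (θ/2)| := by
  rw [Complex.abs_apply, Complex.normSq_apply]
  have hre : (1 - Complex.exp (θ * Complex.I)).re = 1 - Real.cos θ := by
    simp [Complex.exp_ofReal_mul_I_re]
  have him : (1 - Complex.exp (θ * Complex.I)).im = -Real.sin θ := by
    simp [Complex.exp_ofReal_mul_I_im]
  rw [hre, him]
  have hc := Real.cos_two_mul (θ/2)
  have h2 : (2:ℝ)*(θ/2) = θ := by ring
  rw [h2] at hc
  have hp := Real.sin_sq_add_cos_sq (θ/2)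
  have hp2 := Real.sin_sq_add_cos_sq θ
  have habs : |Real.sin (θ/2)|^2 = Real.sin (θ/2)^2 := sq_abs _
  have h1 : (1 - Real.cos θ) * (1 - Real.cos θ) + -Real.sin θ * -Real.sin θ
      = (2*|Real.sin (θ/2)|)^2 := by nlinarith
  rw [h1, Real.sqrt_sq (by positivity)]

def q0 : ℝ → ℝ := fun θ => Real.log (Complex.abs (1 - Complex.exp (θ * Complex.I)))

lemma q0_periodic : Function.Periodic q0 (2*π) := by
  intro θ
  unfold q0
  congr 2
  push_cast
  rw [add_mul, Complex.exp_add]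
  simp [Complex.exp_two_pi_mul_I]

lemma cont_exp_aux : Continuous (fun θ : ℝ => Complex.exp (θ * Complex.I)) :=
  Complex.continuous_exp.comp (Complex.continuous_ofReal.mul continuous_const)

lemma q0_meas : Measurable q0 :=
  Real.measurable_log.comp
    (Complex.continuous_abs.measurable.comp (continuous_const.sub cont_exp_aux).measurable)

lemma q0_int_base : IntervalIntegrable q0 volume 0 (2*π) := by
  have hb : IntervalIntegrable (fun θ : ℝ => Real.log 2 + abs (Real.log |Real.sin (θ/2)|))
      volume 0 (2*π) := _root_.intervalIntegrable_const.add logsinhalf_int.abs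
  apply hb.mono_fun' q0_meas.aestronglyMeasurable
  refine Filter.Eventually.of_forall fun θ => ?_
  simp only [Real.norm_eq_abs]
  unfold q0
  rw [abs_one_sub_exp θ]
  have hlog2 : (0:ℝ) ≤ Real.log 2 := Real.log_nonneg (by norm_num)
  rcases eq_or_ne (Real.sin (θ/2)) 0 with h | h
  · rw [h]
    simp only [abs_zero, mul_zero, Real.log_zero, abs_zero]
    linarith [abs_nonneg (Real.log |Real.sin (θ/2)|)]
  · rw [Real.log_mul (by norm_num) (by simpa using h)]
    have h3 := abs_add_le (Real.log 2) (Real.log |Real.sin (θ/2)|)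
    have h4 : |Real.log 2| = Real.log 2 := abs_of_nonneg hlog2
    linarith

lemma periodic_int {f : ℝ → ℝ} {T : ℝ} (hT : 0 < T) (hp : Function.Periodic f T)
    (h : IntervalIntegrable f volume 0 T) (a b : ℝ) : IntervalIntegrable f volume a b := by
  have key : ∀ k : ℤ, IntervalIntegrable f volume (k*T) (k*T + T) := by
    intro k
    have h2 := h.comp_add_right (-(k*T))
    have h3 : (fun x : ℝ => f (x + -((k:ℝ)*T))) = f := by
      ext x
      have h4 := (hp.int_mul (-k)) x
      push_cast at h4
      rw [← h4]
      ring_nf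
    rw [h3] at h2
    have e1 : (0:ℝ) - -((k:ℝ)*T) = k*T := by ring
    have e2 : T - -((k:ℝ)*T) = k*T + T := by ring
    rwa [e1, e2] at h2
  have chain : ∀ n : ℕ, IntervalIntegrable f volume (-(n*T)) (n*T) := by
    intro n
    induction n with
    | zero => simp
    | succ n ih =>
      have hl := key (-(n+1))
      have hr := key n
      have hl' : IntervalIntegrable f volume (-((n+1:ℝ)*T)) (-((n:ℝ)*T)) := by
        push_cast at hl
        have e2 : (-((n:ℝ)+1))*T + T = -((n:ℝ)*T) := by ring
        have e1 : (-((n:ℝ)+1))*T = -(((n:ℝ)+1)*T) := by ring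
        rwa [e2, e1] at hl
      have hr' : IntervalIntegrable f volume ((n:ℝ)*T) ((n+1:ℝ)*T) := by
        push_cast at hr
        have e2 : (n:ℝ)*T + T = ((n:ℝ)+1)*T := by ring
        rwa [e2] at hr
      have := (hl'.trans ih).trans hr'
      have e3 : ((n:ℝ)+1) = ((n+1 : ℕ):ℝ) := by push_cast; ring
      rwa [e3] at this
  obtain ⟨n, hn⟩ := exists_nat_ge (max |a| |b| / T)
  have hn' : max |a| |b| ≤ n * T := by
    rw [div_le_iff₀ hT] at hn; exact hn
  have ha : |a| ≤ n*T := le_trans (le_max_left _ _) hn'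
  have hb : |b| ≤ n*T := le_trans (le_max_right _ _) hn'
  apply (chain n).mono_set
  rw [uIcc_subset_uIcc_iff_le]
  have h6 : (0:ℝ) ≤ (n:ℝ)*T := by positivity
  have h5 : -((n:ℝ)*T) ≤ (n:ℝ)*T := by linarith
  constructor
  · rw [min_eq_left h5]
    exact le_min (neg_le_of_abs_le ha) (neg_le_of_abs_le hb)
  · rw [max_eq_right h5]
    exact max_le (le_of_abs_le ha) (le_of_abs_le hb)

lemma q0_int (a b : ℝ) : IntervalIntegrable q0 volume a b :=
  periodic_int (by positivity) q0_periodic q0_int_base a b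




/-- Mean value: for |w| < 1, ∫₀^{2π} log|1 + w e^{iθ}| dθ = 0. -/
lemma mv {w : ℂ} (hw : Complex.abs w < 1) :
    ∫ θ in (0:ℝ)..(2*π), Real.log (Complex.abs (1 + w * Complex.exp (θ * Complex.I))) = 0 := by
  set f : ℂ → ℂ := fun z => Complex.log (1 + w * z) with hf
  have hmem : ∀ z : ℂ, Complex.abs z ≤ 1 → 1 + w * z ∈ Complex.slitPlane := by
    intro z hz
    left
    have h1 : Complex.abs (w*z) < 1 := by
      rw [map_mul]
      calc Complex.abs w * Complex.abs z ≤ Complex.abs w * 1 :=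
        mul_le_mul_of_nonneg_left hz (Complex.abs.nonneg w)
      _ < 1 := by simpa using hw
    have h2 : -(Complex.abs (w*z)) ≤ (w*z).re :=
      (abs_le.1 (Complex.abs_re_le_abs _)).1
    simp only [Complex.add_re, Complex.one_re]
    linarith
  have hdiff : DiffContOnCl ℂ f (Metric.ball 0 1) := by
    apply DifferentiableOn.diffContOnCl
    intro z hz
    have hz1 : Complex.abs z ≤ 1 := by
      rw [closure_ball (0:ℂ) one_ne_zero] at hz
      simpa [Complex.dist_eq, Complex.abs_def'] using Metric.mem_closedBall.1 hz
    exact (((differentiableAt_const (1:ℂ)).add ((differentiableAt_id).const_mul w)).clog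
      (hmem z hz1)).differentiableWithinAt
  have hcauchy := hdiff.circleIntegral_sub_inv_smul (Metric.mem_ball_self one_pos)
  have hf0 : f 0 = 0 := by simp [hf]
  rw [hf0, smul_zero] at hcauchy
  rw [circleIntegral] at hcauchy
  simp only [deriv_circleMap, circleMap_zero, sub_zero, smul_eq_mul] at hcauchy
  have hint : ∀ θ : ℝ, (1:ℝ) * Complex.exp (θ*Complex.I) * Complex.I *
      (((1:ℝ) * Complex.exp (θ*Complex.I))⁻¹ * f ((1:ℝ)*Complex.exp (θ*Complex.I)))
      = Complex.I * f (Complex.exp (θ*Complex.I)) := by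
    intro θ
    have hne : Complex.exp (θ*Complex.I) ≠ 0 := Complex.exp_ne_zero _
    field_simp
    simp
  rw [show (fun θ:ℝ => (1:ℝ) * Complex.exp (θ*Complex.I) * Complex.I *
      (((1:ℝ) * Complex.exp (θ*Complex.I))⁻¹ * f ((1:ℝ)*Complex.exp (θ*Complex.I)))) =
      (fun θ:ℝ => Complex.I * f (Complex.exp (θ*Complex.I))) from funext hint] at hcauchy
  rw [intervalIntegral.integral_const_mul] at hcauchy
  have hI : (Complex.I : ℂ) ≠ 0 := Complex.I_ne_zero
  have hzero : ∫ θ in (0:ℝ)..(2*π), f (Complex.exp (θ*Complex.I)) = 0 := by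
    rcases mul_eq_zero.mp hcauchy with h | h
    · exact absurd h hI
    · exact h
  have hcont : Continuous fun θ : ℝ => f (Complex.exp (θ*Complex.I)) := by
    apply Continuous.clog
    · exact continuous_const.add (continuous_const.mul
        (Complex.continuous_exp.comp (Complex.continuous_ofReal.mul continuous_const)))
    · intro θ
      exact hmem _ (le_of_eq (Complex.abs_exp_ofReal_mul_I θ))
  have hii : IntervalIntegrable (fun θ : ℝ => f (Complex.exp (θ*Complex.I))) volume 0 (2*π) :=
    hcont.intervalIntegrable _ _
  have hre := Complex.reCLM.intervalIntegral_comp_comm hii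
  rw [hzero] at hre
  simp only [Complex.reCLM_apply, map_zero] at hre
  have final : (∫ θ in (0:ℝ)..(2*π), Real.log (Complex.abs (1 + w * Complex.exp (θ * Complex.I))))
      = ∫ θ in (0:ℝ)..(2*π), (f (Complex.exp (θ*Complex.I))).re := by
    apply intervalIntegral.integral_congr
    intro θ _
    simp [hf, Complex.log_re, Complex.abs_def']
  rw [final, hre]





lemma countable_exp_fiber (z : ℂ) : {θ : ℝ | Complex.exp (θ * Complex.I) = z}.Countable := by
  by_cases h : ∃ θ₀ : ℝ, Complex.exp (θ₀ * Complex.I) = z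
  · obtain ⟨θ₀, h₀⟩ := h
    apply Set.Countable.mono ?_ (Set.countable_range (fun n : ℤ => θ₀ + n * (2*π)))
    intro θ hθ
    have h1 : Complex.exp ((θ - θ₀ : ℝ) * Complex.I) = 1 := by
      push_cast
      rw [sub_mul, Complex.exp_sub, hθ, h₀, div_self]
      rw [← h₀]; exact Complex.exp_ne_zero _
    obtain ⟨n, hn⟩ := Complex.exp_eq_one_iff.mp h1
    refine ⟨n, ?_⟩
    have h3 : (θ - θ₀ : ℝ) = (n:ℝ) * (2*π) := by
      have hn' : ((θ - θ₀ : ℝ) : ℂ) * Complex.I = (((n:ℝ) * (2*π) : ℝ) : ℂ) * Complex.I := by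
        rw [hn]; push_cast; ring
      have h4 := mul_right_cancel₀ Complex.I_ne_zero hn'
      exact_mod_cast h4
    simp only
    linarith
  · push_neg at h
    have : {θ : ℝ | Complex.exp (θ * Complex.I) = z} = ∅ := by
      ext θ; simpa using h θ
    rw [this]; exact Set.countable_empty

/-- shift: ∫₀^{2π} q₀(θ+c) dθ = ∫₀^{2π} q₀ -/
lemma q0_shift (c : ℝ) : (∫ θ in (0:ℝ)..(2*π), q0 (θ + c)) = ∫ θ in (0:ℝ)..(2*π), q0 θ := by
  rw [intervalIntegral.integral_comp_add_right]
  have := q0_periodic.intervalIntegral_add_eq c 0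
  simpa [zero_add, add_comm] using this

/-- ∫₀^{2π} log|1-e^{iθ}| dθ = 0 -/
lemma bv : (∫ θ in (0:ℝ)..(2*π), q0 θ) = 0 := by
  have hdouble : (∫ θ in (0:ℝ)..(2*π), q0 (2*θ)) = ∫ θ in (0:ℝ)..(2*π), q0 θ := by
    rw [intervalIntegral.integral_comp_mul_left q0 (by norm_num : (2:ℝ) ≠ 0)]
    have h1 : (2:ℝ) * (2*π) = 2*π + 2*π := by ring
    have h2 : (2:ℝ) * 0 = 0 := by ring
    rw [h1, h2]
    rw [← intervalIntegral.integral_add_adjacent_intervals (q0_int 0 (2*π)) (q0_int (2*π) (2*π+2*π))]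
    have h3 : (∫ θ in (2*π)..(2*π+2*π), q0 θ) = ∫ θ in (0:ℝ)..(2*π), q0 θ := by
      have h4 := q0_periodic.intervalIntegral_add_eq (2*π) 0
      rw [zero_add] at h4
      rw [h4]
    rw [h3]
    rw [smul_eq_mul]
    ring
  -- splitting a.e.
  have hsplit : (∫ θ in (0:ℝ)..(2*π), q0 (2*θ)) = (∫ θ in (0:ℝ)..(2*π), q0 θ + q0 (θ + π)) := by
    apply intervalIntegral.integral_congr_ae
    have hc : ({θ : ℝ | Complex.exp (θ * Complex.I) = 1} ∪
        {θ : ℝ | Complex.exp (θ * Complex.I) = -1}).Countable :=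
      (countable_exp_fiber 1).union (countable_exp_fiber (-1))
    filter_upwards [hc.ae_notMem volume] with θ hθ _
    simp only [Set.mem_union, Set.mem_setOf_eq] at hθ
    push_neg at hθ
    obtain ⟨hθ1, hθ2⟩ := hθ
    unfold q0
    set e := Complex.exp (θ*Complex.I) with he
    have key1 : Complex.exp ((2*θ : ℝ) * Complex.I) = e^2 := by
      rw [show ((2*θ:ℝ):ℂ)*Complex.I = θ*Complex.I + θ*Complex.I by push_cast; ring,
        Complex.exp_add, sq]
    have key2 : Complex.exp ((θ+π : ℝ) * Complex.I) = -e := by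
      rw [show ((θ+π:ℝ):ℂ)*Complex.I = θ*Complex.I + π*Complex.I by push_cast; ring,
        Complex.exp_add, Complex.exp_pi_mul_I]
      ring
    have hfac : (1:ℂ) - Complex.exp ((2*θ : ℝ) * Complex.I) = (1 - e) * (1 + e) := by
      rw [key1]; ring
    have hne1 : (1:ℂ) - e ≠ 0 := fun h => hθ1 (by linear_combination -h)
    have hne2 : (1:ℂ) + e ≠ 0 := fun h => hθ2 (by linear_combination h)
    show Real.log (Complex.abs (1 - Complex.exp ((2*θ:ℝ) * Complex.I)))
      = Real.log (Complex.abs (1 - Complex.exp ((θ:ℝ) * Complex.I)))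
        + Real.log (Complex.abs (1 - Complex.exp ((θ+π:ℝ) * Complex.I)))
    rw [hfac, key2, sub_neg_eq_add, map_mul,
      Real.log_mul (Complex.abs.ne_zero hne1) (Complex.abs.ne_zero hne2)]
  have hshift : (∫ θ in (0:ℝ)..(2*π), q0 (θ + π)) = ∫ θ in (0:ℝ)..(2*π), q0 θ := q0_shift π
  have hadd : (∫ θ in (0:ℝ)..(2*π), q0 θ + q0 (θ + π))
      = (∫ θ in (0:ℝ)..(2*π), q0 θ) + ∫ θ in (0:ℝ)..(2*π), q0 (θ + π) := by
    apply intervalIntegral.integral_add (q0_int 0 (2*π))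
    have h5 := (q0_int (0+π) (2*π+π)).comp_add_right π
    simpa using h5
  have key := hdouble
  rw [hsplit, hadd, hshift] at key
  linarith





lemma conj_exp (θ : ℝ) : (starRingEnd ℂ) (Complex.exp (θ * Complex.I))
    = Complex.exp (-(θ * Complex.I)) := by
  rw [← Complex.exp_conj, map_mul, Complex.conj_ofReal, Complex.conj_I, mul_neg]

lemma exp_mul_exp_neg (θ : ℝ) :
    Complex.exp (-(θ * Complex.I)) * Complex.exp (θ * Complex.I) = 1 := by
  rw [← Complex.exp_add]; simp

/-- |C + D e^{iθ}| = |conj D + conj C e^{iθ}| -/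
lemma abs_reflect (C D : ℂ) (θ : ℝ) :
    Complex.abs (C + D * Complex.exp (θ * Complex.I))
      = Complex.abs ((starRingEnd ℂ) D + (starRingEnd ℂ) C * Complex.exp (θ * Complex.I)) := by
  have h1 : (starRingEnd ℂ) D + (starRingEnd ℂ) C * Complex.exp (θ * Complex.I)
      = (starRingEnd ℂ) (C + D * Complex.exp (θ * Complex.I)) * Complex.exp (θ * Complex.I) := by
    rw [map_add, map_mul, conj_exp]
    linear_combination (-((starRingEnd ℂ) D)) * exp_mul_exp_neg θ
  rw [h1, map_mul, Complex.abs_exp_ofReal_mul_I, mul_one, Complex.abs_conj]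

/-- for |u| = 1: ∫₀^{2π} log|1 + u e^{iθ}| dθ = 0 -/
lemma uv {u : ℂ} (hu : Complex.abs u = 1) :
    (∫ θ in (0:ℝ)..(2*π), Real.log (Complex.abs (1 + u * Complex.exp (θ * Complex.I)))) = 0 := by
  have hexp : Complex.exp (u.arg * Complex.I) = u := by
    have := Complex.abs_mul_exp_arg_mul_I u
    rwa [hu, Complex.ofReal_one, one_mul] at this
  have hfun : ∀ θ : ℝ, (1:ℂ) + u * Complex.exp (θ * Complex.I)
      = 1 - Complex.exp (((θ + (u.arg + π)) : ℝ) * Complex.I) := by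
    intro θ
    rw [show (((θ + (u.arg + π)) : ℝ) : ℂ) * Complex.I
        = θ * Complex.I + (u.arg * Complex.I + π * Complex.I) by push_cast; ring,
      Complex.exp_add, Complex.exp_add, Complex.exp_pi_mul_I, hexp]
    ring
  have h2 : (∫ θ in (0:ℝ)..(2*π), Real.log (Complex.abs (1 + u * Complex.exp (θ * Complex.I))))
      = ∫ θ in (0:ℝ)..(2*π), q0 (θ + (u.arg + π)) := by
    apply intervalIntegral.integral_congr
    intro θ _
    show Real.log (Complex.abs (1 + u * Complex.exp (θ * Complex.I)))
      = Real.log (Complex.abs (1 - Complex.exp (((θ + (u.arg + π)) : ℝ) * Complex.I)))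
    rw [hfun θ]
  rw [h2, q0_shift, bv]

lemma one_add_ne_zero {w : ℂ} (hw : Complex.abs w < 1) (θ : ℝ) :
    (1:ℂ) + w * Complex.exp (θ * Complex.I) ≠ 0 := by
  intro h
  have h2 : w * Complex.exp (θ * Complex.I) = -1 := by linear_combination h
  have h3 := congrArg Complex.abs h2
  rw [map_mul, Complex.abs_exp_ofReal_mul_I, mul_one] at h3
  simp at h3
  rw [h3] at hw
  exact lt_irrefl _ hw

/-- the key case: |B| < |A| -/
lemma cont_exp : Continuous (fun θ : ℝ => Complex.exp (θ * Complex.I)) :=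
  Complex.continuous_exp.comp (Complex.continuous_ofReal.mul continuous_const)

/-- the key case: |B| < |A| -/
lemma full_lt {A B : ℂ} (h : Complex.abs B < Complex.abs A) :
    (∫ θ in (0:ℝ)..(2*π), Real.log (Complex.abs (A + B * Complex.exp (θ * Complex.I))))
      = 2*π*Real.log (Complex.abs A) := by
  have hA : A ≠ 0 := by
    intro h0; rw [h0, map_zero] at h
    exact absurd h (not_lt.2 (Complex.abs.nonneg B))
  have hApos : 0 < Complex.abs A := Complex.abs.pos hA
  have hw : Complex.abs (B/A) < 1 := by
    rw [map_div₀, div_lt_one hApos]; exact h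
  have habs0 : Complex.abs A ≠ 0 := ne_of_gt hApos
  have hpoint : ∀ θ : ℝ, Real.log (Complex.abs (A + B * Complex.exp (θ * Complex.I)))
      = Real.log (Complex.abs A)
        + Real.log (Complex.abs (1 + (B/A) * Complex.exp (θ * Complex.I))) := by
    intro θ
    rw [← Real.log_mul habs0 (Complex.abs.ne_zero (one_add_ne_zero hw θ)), ← map_mul]
    congr 2
    field_simp
  have hcont : Continuous fun θ : ℝ =>
      Real.log (Complex.abs (1 + (B/A) * Complex.exp (θ * Complex.I))) := by
    apply Continuous.log
    · exact Complex.continuous_abs.comp (continuous_const.add (continuous_const.mul cont_exp))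
    · exact fun θ => Complex.abs.ne_zero (one_add_ne_zero hw θ)
  rw [intervalIntegral.integral_congr (g := fun θ : ℝ => Real.log (Complex.abs A)
      + Real.log (Complex.abs (1 + (B/A) * Complex.exp (θ * Complex.I))))
      (fun θ _ => hpoint θ)]
  rw [intervalIntegral.integral_add (_root_.intervalIntegrable_const)
      (hcont.intervalIntegrable _ _), mv hw, add_zero, intervalIntegral.integral_const,
      smul_eq_mul]
  ring

/-- the eq case: |A| = |B|, A ≠ 0 -/
lemma full_eq {A B : ℂ} (h : Complex.abs B = Complex.abs A) (hA : A ≠ 0) :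
    (∫ θ in (0:ℝ)..(2*π), Real.log (Complex.abs (A + B * Complex.exp (θ * Complex.I))))
      = 2*π*Real.log (Complex.abs A) := by
  have hApos : 0 < Complex.abs A := Complex.abs.pos hA
  have habs0 : Complex.abs A ≠ 0 := ne_of_gt hApos
  have hu : Complex.abs (B/A) = 1 := by
    rw [map_div₀, h, div_self habs0]
  have hpoint : ∀ θ : ℝ, Complex.exp (θ * Complex.I) ≠ -(A/B)
      → Real.log (Complex.abs (A + B * Complex.exp (θ * Complex.I)))
      = Real.log (Complex.abs A)
        + Real.log (Complex.abs (1 + (B/A) * Complex.exp (θ * Complex.I))) := by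
    intro θ hn
    have hB : B ≠ 0 := by
      intro h0
      rw [h0, map_zero] at h
      exact hA (Complex.abs.eq_zero.mp h.symm)
    have h0 : (1:ℂ) + (B/A) * Complex.exp (θ * Complex.I) ≠ 0 := by
      intro hz
      apply hn
      field_simp at hz ⊢
      linear_combination hz
    rw [← Real.log_mul habs0 (Complex.abs.ne_zero h0), ← map_mul]
    congr 2
    field_simp
  have hint : IntervalIntegrable (fun θ : ℝ =>
      Real.log (Complex.abs (1 + (B/A) * Complex.exp (θ * Complex.I)))) volume 0 (2*π) := by
    -- it equals q0 (θ + c)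
    have hexp : Complex.exp ((B/A).arg * Complex.I) = B/A := by
      have h2 := Complex.abs_mul_exp_arg_mul_I (B/A)
      rwa [hu, Complex.ofReal_one, one_mul] at h2
    have hfun : ∀ θ : ℝ, (1:ℂ) + (B/A) * Complex.exp (θ * Complex.I)
        = 1 - Complex.exp (((θ + ((B/A).arg + π)) : ℝ) * Complex.I) := by
      intro θ
      rw [show (((θ + ((B/A).arg + π)) : ℝ) : ℂ) * Complex.I
          = θ * Complex.I + ((B/A).arg * Complex.I + π * Complex.I) by push_cast; ring,
        Complex.exp_add, Complex.exp_add, Complex.exp_pi_mul_I, hexp]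
      ring
    have heq2 : (fun θ : ℝ => Real.log (Complex.abs (1 + (B/A) * Complex.exp (θ * Complex.I))))
        = fun θ : ℝ => q0 (θ + ((B/A).arg + π)) := by
      ext θ
      show _ = Real.log (Complex.abs (1 - Complex.exp (((θ + ((B/A).arg + π)) : ℝ) * Complex.I)))
      rw [hfun θ]
    rw [heq2]
    have h5 := (q0_int (0 + ((B/A).arg + π)) (2*π + ((B/A).arg + π))).comp_add_right
      ((B/A).arg + π)
    simpa using h5
  have hce : (∫ θ in (0:ℝ)..(2*π), Real.log (Complex.abs (A + B * Complex.exp (θ * Complex.I))))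
      = ∫ θ in (0:ℝ)..(2*π), (Real.log (Complex.abs A)
        + Real.log (Complex.abs (1 + (B/A) * Complex.exp (θ * Complex.I)))) := by
    apply intervalIntegral.integral_congr_ae
    filter_upwards [(countable_exp_fiber (-(A/B))).ae_notMem volume] with θ hθ _
    exact hpoint θ hθ
  rw [hce]
  rw [intervalIntegral.integral_add (_root_.intervalIntegrable_const) hint, uv hu, add_zero,
    intervalIntegral.integral_const, smul_eq_mul]
  ring

lemma full (A B : ℂ) :
    (∫ θ in (0:ℝ)..(2*π), Real.log (Complex.abs (A + B * Complex.exp (θ * Complex.I))))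
      = 2*π*Real.log (max (Complex.abs A) (Complex.abs B)) := by
  rcases lt_trichotomy (Complex.abs B) (Complex.abs A) with hlt | heq | hgt
  · rw [max_eq_left hlt.le]; exact full_lt hlt
  · rcases eq_or_ne A 0 with rfl | hA
    · have hB : B = 0 := by
        rw [map_zero] at heq
        exact Complex.abs.eq_zero.mp heq
      subst hB
      simp
    · rw [show max (Complex.abs A) (Complex.abs B) = Complex.abs A by rw [heq, max_self]]
      exact full_eq heq hA
  · rw [max_eq_right hgt.le]
    have hrefl : (∫ θ in (0:ℝ)..(2*π), Real.log (Complex.abs (A + B * Complex.exp (θ * Complex.I))))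
        = ∫ θ in (0:ℝ)..(2*π), Real.log (Complex.abs ((starRingEnd ℂ) B
            + (starRingEnd ℂ) A * Complex.exp (θ * Complex.I))) := by
      apply intervalIntegral.integral_congr
      intro θ _
      show Real.log (Complex.abs (A + B * Complex.exp (θ * Complex.I)))
        = Real.log (Complex.abs ((starRingEnd ℂ) B + (starRingEnd ℂ) A * Complex.exp (θ * Complex.I)))
      rw [abs_reflect A B θ]
    rw [hrefl, full_lt (by rwa [Complex.abs_conj, Complex.abs_conj]), Complex.abs_conj]




lemma absSq (p q θ : ℝ) :
    Complex.abs ((p:ℂ) + (q:ℂ) * Complex.exp (θ * Complex.I))^2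
      = p^2 + q^2 + 2*p*q*Real.cos θ := by
  rw [Complex.sq_abs, Complex.normSq_apply]
  have hre : ((p:ℂ) + (q:ℂ) * Complex.exp (θ * Complex.I)).re = p + q * Real.cos θ := by
    simp [Complex.exp_ofReal_mul_I_re]
  have him : ((p:ℂ) + (q:ℂ) * Complex.exp (θ * Complex.I)).im = q * Real.sin θ := by
    simp [Complex.exp_ofReal_mul_I_im]
  rw [hre, him]
  have hp := Real.sin_sq_add_cos_sq θ
  nlinarith

lemma log_mul_abs_le {c s : ℝ} (hc : c ≠ 0) :
    |Real.log (c*s)| ≤ |Real.log c| + |Real.log s| := by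
  rcases eq_or_ne s 0 with rfl | hs
  · simp [abs_nonneg]
  · rw [Real.log_mul hc hs]
    exact abs_add_le _ _

lemma pq_meas (p q : ℝ) : Measurable (fun θ : ℝ =>
    Real.log (Complex.abs ((p:ℂ) + (q:ℂ) * Complex.exp (θ * Complex.I)))) :=
  Real.measurable_log.comp (Complex.continuous_abs.measurable.comp
    (continuous_const.add (continuous_const.mul cont_exp)).measurable)

/-- master integrability -/
lemma pq_int (p q a b : ℝ) : IntervalIntegrable (fun θ : ℝ =>
    Real.log (Complex.abs ((p:ℂ) + (q:ℂ) * Complex.exp (θ * Complex.I)))) volume a b := by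
  rcases eq_or_ne |p| |q| with habs | habs
  · -- |p| = |q|
    rcases eq_or_ne p 0 with rfl | hp
    · -- then q = 0
      have hq : q = 0 := by
        rw [abs_zero] at habs; exact abs_eq_zero.mp habs.symm
      subst hq
      simp only [Complex.ofReal_zero, zero_add, zero_mul, map_zero, Real.log_zero]
      exact intervalIntegrable_const
    · -- q = p or q = -p
      have hq : q = p ∨ q = -p := by
        rcases abs_eq_abs.mp habs.symm with h | h
        · exact Or.inl h
        · exact Or.inr h
      have hfact : ∀ θ : ℝ, Complex.abs ((p:ℂ) + (q:ℂ) * Complex.exp (θ * Complex.I))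
          = |p| * Complex.abs (1 - Complex.exp (((θ + (if q = p then π else 0) : ℝ)) * Complex.I)) := by
        intro θ
        have hsh : Complex.exp (((θ + (if q = p then π else 0)) : ℝ) * Complex.I)
            = (if q = p then -1 else 1) * Complex.exp (θ * Complex.I) := by
          split_ifs
          · rw [show (((θ + π) : ℝ) : ℂ) * Complex.I = θ*Complex.I + π*Complex.I by push_cast; ring,
              Complex.exp_add, Complex.exp_pi_mul_I]
            ring
          · simp
        rw [hsh]
        have h1 : (1:ℂ) - (if q = p then -1 else 1) * Complex.exp (θ * Complex.I)
            = 1 + ((q/p : ℝ):ℂ) * Complex.exp (θ * Complex.I) := by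
          rcases hq with rfl | rfl
          · simp only [if_pos rfl]
            rw [div_self hp]
            push_cast
            ring
          · have hne : -p ≠ p := by
              intro hh; apply hp; linarith
            simp only [if_neg hne]
            rw [neg_div, div_self hp]
            push_cast
            ring
        rw [h1]
        have h2 : ((p:ℂ)) * (1 + ((q/p : ℝ):ℂ) * Complex.exp (θ * Complex.I))
            = (p:ℂ) + (q:ℂ) * Complex.exp (θ * Complex.I) := by
          have hpc : (p:ℂ) ≠ 0 := Complex.ofReal_ne_zero.2 hp
          push_cast
          field_simp
        rw [← h2, map_mul, Complex.abs_ofReal]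
      -- bound
      set d : ℝ := if q = p then π else 0 with hd
      have hbint : IntervalIntegrable (fun θ : ℝ => abs (Real.log (|p|)) + |q0 (θ + d)|) volume a b := by
        apply intervalIntegrable_const.add
        have h5 := (q0_int (a + d) (b + d)).comp_add_right d
        simpa using h5.abs
      apply hbint.mono_fun' (pq_meas p q).aestronglyMeasurable
      refine Filter.Eventually.of_forall fun θ => ?_
      simp only [Real.norm_eq_abs]
      rw [hfact θ]
      exact log_mul_abs_le (s := Complex.abs (1 - Complex.exp (((θ + d : ℝ)) * Complex.I)))
        (c := |p|) (by simpa using hp)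
  · -- |p| ≠ |q| : continuous
    have hne : ∀ θ : ℝ, Complex.abs ((p:ℂ) + (q:ℂ) * Complex.exp (θ * Complex.I)) ≠ 0 := by
      intro θ h0
      have h1 : (p:ℂ) + (q:ℂ) * Complex.exp (θ * Complex.I) = 0 := by
        rwa [map_eq_zero] at h0
      have h2 : (p:ℂ) = ((-q : ℝ):ℂ) * Complex.exp (θ * Complex.I) := by
        push_cast; linear_combination h1
      have h3 := congrArg Complex.abs h2
      rw [Complex.abs_ofReal, map_mul, Complex.abs_ofReal, Complex.abs_exp_ofReal_mul_I,
        mul_one, abs_neg] at h3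
      exact habs h3
    apply Continuous.intervalIntegrable
    apply Continuous.log
    · exact Complex.continuous_abs.comp (continuous_const.add (continuous_const.mul cont_exp))
    · exact hne





lemma exp_per (θ : ℝ) : Complex.exp (((θ + 2*π : ℝ)) * Complex.I) = Complex.exp (θ * Complex.I) := by
  push_cast
  rw [add_mul, Complex.exp_add]
  simp [Complex.exp_two_pi_mul_I]

-- pointwise symmetry lemmas
lemma evenP (p q x : ℝ) : Complex.abs ((p:ℂ) + (q:ℂ) * Complex.exp (((-x:ℝ)) * Complex.I))
    = Complex.abs ((p:ℂ) + (q:ℂ) * Complex.exp (x * Complex.I)) := by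
  have h1 : (p:ℂ) + (q:ℂ) * Complex.exp (((-x:ℝ)) * Complex.I)
      = (starRingEnd ℂ) ((p:ℂ) + (q:ℂ) * Complex.exp (x * Complex.I)) := by
    rw [map_add, map_mul, Complex.conj_ofReal, Complex.conj_ofReal, conj_exp,
      Complex.ofReal_neg, neg_mul]
  rw [h1, Complex.abs_conj]

lemma evenM (p q x : ℝ) : Complex.abs ((p:ℂ) - (q:ℂ) * Complex.exp (((-x:ℝ)) * Complex.I))
    = Complex.abs ((p:ℂ) - (q:ℂ) * Complex.exp (x * Complex.I)) := by
  have h1 : (p:ℂ) - (q:ℂ) * Complex.exp (((-x:ℝ)) * Complex.I)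
      = (starRingEnd ℂ) ((p:ℂ) - (q:ℂ) * Complex.exp (x * Complex.I)) := by
    rw [map_sub, map_mul, Complex.conj_ofReal, Complex.conj_ofReal, conj_exp,
      Complex.ofReal_neg, neg_mul]
  rw [h1, Complex.abs_conj]

lemma shiftM (p q x : ℝ) : Complex.abs ((p:ℂ) - (q:ℂ) * Complex.exp (((π - x:ℝ)) * Complex.I))
    = Complex.abs ((p:ℂ) + (q:ℂ) * Complex.exp (((-x:ℝ)) * Complex.I)) := by
  congr 1
  rw [show ((π - x:ℝ):ℂ) * Complex.I = (π:ℂ)*Complex.I + ((-x:ℝ):ℂ)*Complex.I by push_cast; ring,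
    Complex.exp_add, Complex.exp_pi_mul_I]
  ring

lemma shiftP (p q x : ℝ) : Complex.abs ((p:ℂ) + (q:ℂ) * Complex.exp (((π - x:ℝ)) * Complex.I))
    = Complex.abs ((p:ℂ) - (q:ℂ) * Complex.exp (((-x:ℝ)) * Complex.I)) := by
  congr 1
  rw [show ((π - x:ℝ):ℂ) * Complex.I = (π:ℂ)*Complex.I + ((-x:ℝ):ℂ)*Complex.I by push_cast; ring,
    Complex.exp_add, Complex.exp_pi_mul_I]
  ring

lemma absSqM (p q θ : ℝ) :
    Complex.abs ((p:ℂ) - (q:ℂ) * Complex.exp (θ * Complex.I))^2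
      = p^2 + q^2 - 2*p*q*Real.cos θ := by
  have h := absSq p (-q) θ
  have h2 : (p:ℂ) + ((-q:ℝ):ℂ) * Complex.exp (θ * Complex.I)
      = (p:ℂ) - (q:ℂ) * Complex.exp (θ * Complex.I) := by push_cast; ring
  rw [h2] at h
  rw [h]
  ring

lemma pqm_int (p q a b : ℝ) : IntervalIntegrable (fun θ : ℝ =>
    Real.log (Complex.abs ((p:ℂ) - (q:ℂ) * Complex.exp (θ * Complex.I)))) volume a b := by
  have h := pq_int p (-q) a b
  have h2 : (fun θ : ℝ => Real.log (Complex.abs ((p:ℂ) + ((-q:ℝ):ℂ) * Complex.exp (θ * Complex.I))))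
      = fun θ : ℝ => Real.log (Complex.abs ((p:ℂ) - (q:ℂ) * Complex.exp (θ * Complex.I))) := by
    ext θ
    congr 2
    push_cast
    ring
  rwa [h2] at h

-- tail transforms
lemma tailT_M (p q t : ℝ) :
    (∫ θ in t..π, Real.log (Complex.abs ((p:ℂ) - (q:ℂ) * Complex.exp (θ * Complex.I))))
      = ∫ θ in (0:ℝ)..(π - t),
          Real.log (Complex.abs ((p:ℂ) + (q:ℂ) * Complex.exp (θ * Complex.I))) := by
  have h1 := intervalIntegral.integral_comp_sub_left (a := (0:ℝ)) (b := π - t)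
    (f := fun θ => Real.log (Complex.abs ((p:ℂ) - (q:ℂ) * Complex.exp (θ * Complex.I)))) π
  rw [show π - (π - t) = t by ring, sub_zero] at h1
  rw [← h1]
  apply intervalIntegral.integral_congr
  intro x _
  show Real.log (Complex.abs ((p:ℂ) - (q:ℂ) * Complex.exp (((π - x:ℝ)) * Complex.I))) = _
  rw [shiftM, evenP]

lemma tailT_P (p q t : ℝ) :
    (∫ θ in t..π, Real.log (Complex.abs ((p:ℂ) + (q:ℂ) * Complex.exp (θ * Complex.I))))
      = ∫ θ in (0:ℝ)..(π - t),
          Real.log (Complex.abs ((p:ℂ) - (q:ℂ) * Complex.exp (θ * Complex.I))) := by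
  have h1 := intervalIntegral.integral_comp_sub_left (a := (0:ℝ)) (b := π - t)
    (f := fun θ => Real.log (Complex.abs ((p:ℂ) + (q:ℂ) * Complex.exp (θ * Complex.I)))) π
  rw [show π - (π - t) = t by ring, sub_zero] at h1
  rw [← h1]
  apply intervalIntegral.integral_congr
  intro x _
  show Real.log (Complex.abs ((p:ℂ) + (q:ℂ) * Complex.exp (((π - x:ℝ)) * Complex.I))) = _
  rw [shiftP, evenM]

lemma negT_M (p q t : ℝ) :
    (∫ θ in (-π)..(-t), Real.log (Complex.abs ((p:ℂ) - (q:ℂ) * Complex.exp (θ * Complex.I))))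
      = ∫ θ in t..π, Real.log (Complex.abs ((p:ℂ) - (q:ℂ) * Complex.exp (θ * Complex.I))) := by
  have h1 := intervalIntegral.integral_comp_neg (a := t) (b := π)
    (f := fun θ => Real.log (Complex.abs ((p:ℂ) - (q:ℂ) * Complex.exp (θ * Complex.I))))
  rw [← h1]
  apply intervalIntegral.integral_congr
  intro x _
  show Real.log (Complex.abs ((p:ℂ) - (q:ℂ) * Complex.exp (((-x:ℝ)) * Complex.I))) = _
  rw [evenM]

lemma negT_P2 (p q t : ℝ) :
    (∫ θ in (-π)..(-t), Real.log (Complex.abs ((p:ℂ) + (q:ℂ) * Complex.exp (θ * Complex.I))))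
      = ∫ θ in t..π, Real.log (Complex.abs ((p:ℂ) + (q:ℂ) * Complex.exp (θ * Complex.I))) := by
  have h1 := intervalIntegral.integral_comp_neg (a := t) (b := π)
    (f := fun θ => Real.log (Complex.abs ((p:ℂ) + (q:ℂ) * Complex.exp (θ * Complex.I))))
  rw [← h1]
  apply intervalIntegral.integral_congr
  intro x _
  show Real.log (Complex.abs ((p:ℂ) + (q:ℂ) * Complex.exp (((-x:ℝ)) * Complex.I))) = _
  rw [evenP]

lemma negT_P (p q u : ℝ) :
    (∫ θ in (-u)..(0:ℝ), Real.log (Complex.abs ((p:ℂ) + (q:ℂ) * Complex.exp (θ * Complex.I))))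
      = ∫ θ in (0:ℝ)..u, Real.log (Complex.abs ((p:ℂ) + (q:ℂ) * Complex.exp (θ * Complex.I))) := by
  have h1 := intervalIntegral.integral_comp_neg (a := (0:ℝ)) (b := u)
    (f := fun θ => Real.log (Complex.abs ((p:ℂ) + (q:ℂ) * Complex.exp (θ * Complex.I))))
  rw [neg_zero] at h1
  rw [← h1]
  apply intervalIntegral.integral_congr
  intro x _
  show Real.log (Complex.abs ((p:ℂ) + (q:ℂ) * Complex.exp (((-x:ℝ)) * Complex.I))) = _
  rw [evenP]

lemma negT_Mz (p q u : ℝ) :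
    (∫ θ in (-u)..(0:ℝ), Real.log (Complex.abs ((p:ℂ) - (q:ℂ) * Complex.exp (θ * Complex.I))))
      = ∫ θ in (0:ℝ)..u, Real.log (Complex.abs ((p:ℂ) - (q:ℂ) * Complex.exp (θ * Complex.I))) := by
  have h1 := intervalIntegral.integral_comp_neg (a := (0:ℝ)) (b := u)
    (f := fun θ => Real.log (Complex.abs ((p:ℂ) - (q:ℂ) * Complex.exp (θ * Complex.I))))
  rw [neg_zero] at h1
  rw [← h1]
  apply intervalIntegral.integral_congr
  intro x _
  show Real.log (Complex.abs ((p:ℂ) - (q:ℂ) * Complex.exp (((-x:ℝ)) * Complex.I))) = _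
  rw [evenM]

lemma periodic_P (p q : ℝ) : Function.Periodic
    (fun θ : ℝ => Real.log (Complex.abs ((p:ℂ) + (q:ℂ) * Complex.exp (θ * Complex.I)))) (2*π) := by
  intro θ
  simp only
  rw [exp_per]

lemma II_congr {f g : ℝ → ℝ} {a b : ℝ} (heq : Set.EqOn f g (Set.uIcc a b))
    (hg : IntervalIntegrable g volume a b) : IntervalIntegrable f volume a b := by
  rw [intervalIntegrable_iff] at hg ⊢
  exact hg.congr_fun (fun x hx => (heq (uIoc_subset_uIcc hx)).symm) measurableSet_uIoc

/-- full circle integral of log|p + q e^{iθ}| over [-π, π] -/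
lemma full_circle (p q : ℝ) (hp : 0 < p) (hq : 0 < q) :
    (∫ θ in (-π)..π, Real.log (Complex.abs ((p:ℂ) + (q:ℂ) * Complex.exp (θ * Complex.I))))
      = 2*π*Real.log (max p q) := by
  have hper := (periodic_P p q).intervalIntegral_add_eq (-π) 0
  rw [show -π + 2*π = π by ring, zero_add] at hper
  rw [hper, full]
  rw [Complex.abs_ofReal, Complex.abs_ofReal, abs_of_pos hp, abs_of_pos hq]





theorem stmt_15 (a₁ a₂ b₁ b₂ : ℝ)
    (h1 : 0 < a₁) (h2 : 0 < a₂) (h3 : 0 < b₁) (h4 : 0 < b₂) :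
    (∫ θ in (0 : ℝ)..(2 * π), ∫ φ in (0 : ℝ)..(2 * π),
        Real.log (norm ((a₁ : ℂ) + (b₁ : ℂ) * Complex.exp (θ * Complex.I)
          + ((b₂ : ℂ) - (a₂ : ℂ) * Complex.exp (θ * Complex.I))
              * Complex.exp (φ * Complex.I))))
      = 4 * π ^ 2 * Real.log ((a₁ + b₁ + |a₁ - b₁|) / 2)
        + 2 * π * (∫ θ in (-(π - thetaStar a₁ a₂ b₁ b₂))..(π - thetaStar a₁ a₂ b₁ b₂),
            (Real.log (norm ((b₂ : ℂ) + (a₂ : ℂ) * Complex.exp (θ * Complex.I)))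
              - Real.log (norm ((a₁ : ℂ) - (b₁ : ℂ) * Complex.exp (θ * Complex.I))))) := by
  simp only [← Complex.abs_def']
  have hden : (0:ℝ) < 2*(a₁*b₁ + a₂*b₂) := by positivity
  set c := (a₂^2 + b₂^2 - a₁^2 - b₁^2) / (2*(a₁*b₁ + a₂*b₂)) with hc
  have hT : thetaStar a₁ a₂ b₁ b₂ = Real.arccos c := by
    rw [thetaStar]
    split_ifs with hi1 hi2
    · symm
      rw [Real.arccos_eq_zero, hc, le_div_iff₀ hden]
      have hsq : (a₁+b₁)*(a₁+b₁) < (a₂-b₂)*(a₂-b₂) := by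
        have h5 := mul_self_lt_mul_self (by positivity : (0:ℝ) ≤ a₁+b₁) hi1
        rwa [abs_mul_abs_self] at h5
      nlinarith
    · symm
      rw [Real.arccos_eq_pi, hc, div_le_iff₀ hden]
      have hsq : (a₂+b₂)*(a₂+b₂) < (a₁-b₁)*(a₁-b₁) := by
        have h5 := mul_self_lt_mul_self (by positivity : (0:ℝ) ≤ a₂+b₂) hi2
        rwa [abs_mul_abs_self] at h5
      nlinarith
    · rfl
  set t := thetaStar a₁ a₂ b₁ b₂ with htdef
  have ht0 : 0 ≤ t := by rw [hT]; exact Real.arccos_nonneg c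
  have htpi : t ≤ π := by rw [hT]; exact Real.arccos_le_pi c
  -- comparison lemmas
  have cmp1 : ∀ θ : ℝ, c ≤ Real.cos θ →
      Complex.abs ((b₂:ℂ) - (a₂:ℂ) * Complex.exp (θ * Complex.I))
        ≤ Complex.abs ((a₁:ℂ) + (b₁:ℂ) * Complex.exp (θ * Complex.I)) := by
    intro θ hle
    have hA := absSq a₁ b₁ θ
    have hB := absSqM b₂ a₂ θ
    rw [hc, div_le_iff₀ hden] at hle
    nlinarith [Complex.abs.nonneg ((b₂:ℂ) - (a₂:ℂ) * Complex.exp (θ * Complex.I)),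
      Complex.abs.nonneg ((a₁:ℂ) + (b₁:ℂ) * Complex.exp (θ * Complex.I))]
  have cmp2 : ∀ θ : ℝ, Real.cos θ ≤ c →
      Complex.abs ((a₁:ℂ) + (b₁:ℂ) * Complex.exp (θ * Complex.I))
        ≤ Complex.abs ((b₂:ℂ) - (a₂:ℂ) * Complex.exp (θ * Complex.I)) := by
    intro θ hle
    have hA := absSq a₁ b₁ θ
    have hB := absSqM b₂ a₂ θ
    rw [hc, le_div_iff₀ hden] at hle
    nlinarith [Complex.abs.nonneg ((b₂:ℂ) - (a₂:ℂ) * Complex.exp (θ * Complex.I)),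
      Complex.abs.nonneg ((a₁:ℂ) + (b₁:ℂ) * Complex.exp (θ * Complex.I))]
  -- cosine range facts
  have cos_mid : 0 < t → ∀ θ ∈ Set.uIcc (-t) t, c ≤ Real.cos θ := by
    intro htpos θ hθ
    rw [Set.uIcc_of_le (by linarith : -t ≤ t)] at hθ
    have habs : |θ| ≤ t := abs_le.mpr ⟨hθ.1, hθ.2⟩
    have hct : Real.cos t ≤ Real.cos |θ| :=
      Real.cos_le_cos_of_nonneg_of_le_pi (abs_nonneg θ) htpi habs
    rw [Real.cos_abs] at hct
    have hc1 : c < 1 := by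
      rw [hT] at htpos; exact (Real.arccos_pos).1 htpos
    rcases le_or_gt c (-1) with hcm | hcm
    · linarith [Real.neg_one_le_cos t]
    · have hceq : Real.cos t = c := by rw [hT]; exact Real.cos_arccos hcm.le hc1.le
      linarith
  have cos_tail : t < π → ∀ θ ∈ Set.uIcc t π, Real.cos θ ≤ c := by
    intro htlt θ hθ
    rw [Set.uIcc_of_le htpi] at hθ
    have hct : Real.cos θ ≤ Real.cos t :=
      Real.cos_le_cos_of_nonneg_of_le_pi ht0 hθ.2 hθ.1
    have hcm : -1 < c := by
      by_contra hcon
      push_neg at hcon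
      rw [hT, Real.arccos_eq_pi.2 hcon] at htlt
      exact lt_irrefl _ htlt
    rcases le_or_gt 1 c with hc1 | hc1
    · linarith [Real.cos_le_one θ]
    · have hceq : Real.cos t = c := by rw [hT]; exact Real.cos_arccos hcm.le hc1.le
      linarith
  have cos_tailneg : t < π → ∀ θ ∈ Set.uIcc (-π) (-t), Real.cos θ ≤ c := by
    intro htlt θ hθ
    rw [Set.uIcc_of_le (by linarith : -π ≤ -t)] at hθ
    have h5 : -θ ∈ Set.uIcc t π := by
      rw [Set.uIcc_of_le htpi]; exact ⟨by linarith [hθ.2], by linarith [hθ.1]⟩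
    have h6 := cos_tail htlt (-θ) h5
    rwa [Real.cos_neg] at h6
  -- the max function
  set lm : ℝ → ℝ := fun θ => Real.log
    (max (Complex.abs ((a₁:ℂ) + (b₁:ℂ) * Complex.exp (θ * Complex.I)))
      (Complex.abs ((b₂:ℂ) - (a₂:ℂ) * Complex.exp (θ * Complex.I)))) with hlm
  -- step 1+2
  have step1 : (∫ θ in (0 : ℝ)..(2 * π), ∫ φ in (0 : ℝ)..(2 * π),
        Real.log (Complex.abs ((a₁ : ℂ) + (b₁ : ℂ) * Complex.exp (θ * Complex.I)
          + ((b₂ : ℂ) - (a₂ : ℂ) * Complex.exp (θ * Complex.I))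
              * Complex.exp (φ * Complex.I))))
      = ∫ θ in (0:ℝ)..(2*π), 2*π*(lm θ) := by
    apply intervalIntegral.integral_congr
    intro θ _
    exact full ((a₁ : ℂ) + (b₁ : ℂ) * Complex.exp (θ * Complex.I))
      ((b₂ : ℂ) - (a₂ : ℂ) * Complex.exp (θ * Complex.I))
  have step2 : (∫ θ in (0:ℝ)..(2*π), 2*π*(lm θ)) = 2*π * ∫ θ in (0:ℝ)..(2*π), lm θ :=
    intervalIntegral.integral_const_mul _ _
  -- step 3 : periodic shift
  have hlm_per : Function.Periodic lm (2*π) := by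
    intro θ
    rw [hlm]
    simp only
    rw [exp_per θ]
  have step3 : (∫ θ in (0:ℝ)..(2*π), lm θ) = ∫ θ in (-π)..π, lm θ := by
    have h5 := hlm_per.intervalIntegral_add_eq (-π) 0
    rw [show -π + 2*π = π by ring, zero_add] at h5
    exact h5.symm
  -- EqOn facts
  have eq_mid : 0 < t → Set.EqOn lm
      (fun θ : ℝ => Real.log (Complex.abs ((a₁:ℂ) + (b₁:ℂ) * Complex.exp (θ * Complex.I))))
      (Set.uIcc (-t) t) := by
    intro htpos θ hθ
    rw [hlm]
    simp only
    rw [max_eq_left (cmp1 θ (cos_mid htpos θ hθ))]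
  have eq_tail : t < π → Set.EqOn lm
      (fun θ : ℝ => Real.log (Complex.abs ((b₂:ℂ) - (a₂:ℂ) * Complex.exp (θ * Complex.I))))
      (Set.uIcc t π) := by
    intro htlt θ hθ
    rw [hlm]
    simp only
    rw [max_eq_right (cmp2 θ (cos_tail htlt θ hθ))]
  have eq_tailneg : t < π → Set.EqOn lm
      (fun θ : ℝ => Real.log (Complex.abs ((b₂:ℂ) - (a₂:ℂ) * Complex.exp (θ * Complex.I))))
      (Set.uIcc (-π) (-t)) := by
    intro htlt θ hθ
    rw [hlm]
    simp only
    rw [max_eq_right (cmp2 θ (cos_tailneg htlt θ hθ))]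
  -- integrability of lm on pieces
  have int_mid : IntervalIntegrable lm volume (-t) t := by
    rcases ht0.eq_or_lt with h0 | h0
    · rw [← h0, neg_zero]
    · exact II_congr (eq_mid h0) (pq_int a₁ b₁ (-t) t)
  have int_tail : IntervalIntegrable lm volume t π := by
    rcases htpi.eq_or_lt with h0 | h0
    · rw [h0]
    · exact II_congr (eq_tail h0) (pqm_int b₂ a₂ t π)
  have int_tailneg : IntervalIntegrable lm volume (-π) (-t) := by
    rcases htpi.eq_or_lt with h0 | h0
    · rw [h0]
    · exact II_congr (eq_tailneg h0) (pqm_int b₂ a₂ (-π) (-t))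
  -- splitting
  have split4a := intervalIntegral.integral_add_adjacent_intervals int_tailneg int_mid
  have split4b := intervalIntegral.integral_add_adjacent_intervals
    (int_tailneg.trans int_mid) int_tail
  -- piece evaluations
  have mid_eq : (∫ θ in (-t)..t, lm θ)
      = ∫ θ in (-t)..t, Real.log (Complex.abs ((a₁:ℂ) + (b₁:ℂ) * Complex.exp (θ * Complex.I))) := by
    rcases ht0.eq_or_lt with h0 | h0
    · rw [← h0, neg_zero]
      simp
    · exact intervalIntegral.integral_congr (eq_mid h0)
  have tail_eq : (∫ θ in t..π, lm θ)
      = ∫ θ in t..π, Real.log (Complex.abs ((b₂:ℂ) - (a₂:ℂ) * Complex.exp (θ * Complex.I))) := by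
    rcases htpi.eq_or_lt with h0 | h0
    · rw [h0]; simp
    · exact intervalIntegral.integral_congr (eq_tail h0)
  have tailneg_eq : (∫ θ in (-π)..(-t), lm θ)
      = ∫ θ in (-π)..(-t),
          Real.log (Complex.abs ((b₂:ℂ) - (a₂:ℂ) * Complex.exp (θ * Complex.I))) := by
    rcases htpi.eq_or_lt with h0 | h0
    · rw [h0]; simp
    · exact intervalIntegral.integral_congr (eq_tailneg h0)
  -- h-integral splitting
  have splitHa := intervalIntegral.integral_add_adjacent_intervals
    (pq_int a₁ b₁ (-π) (-t)) (pq_int a₁ b₁ (-t) t)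
  have splitHb := intervalIntegral.integral_add_adjacent_intervals
    ((pq_int a₁ b₁ (-π) (-t)).trans (pq_int a₁ b₁ (-t) t)) (pq_int a₁ b₁ t π)
  have FC := full_circle a₁ b₁ h1 h3
  -- tail transformations
  have eH1 := negT_P2 a₁ b₁ t
  have eH2 := tailT_P a₁ b₁ t
  have eH3 := negT_Mz a₁ b₁ (π - t)
  have eH4 := intervalIntegral.integral_add_adjacent_intervals
    (pqm_int a₁ b₁ (-(π - t)) 0) (pqm_int a₁ b₁ 0 (π - t))
  have eS1 := negT_M b₂ a₂ t
  have eS2 := tailT_M b₂ a₂ t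
  have eS3 := negT_P b₂ a₂ (π - t)
  have eS4 := intervalIntegral.integral_add_adjacent_intervals
    (pq_int b₂ a₂ (-(π - t)) 0) (pq_int b₂ a₂ 0 (π - t))
  -- RHS split
  have RHSsplit : (∫ θ in (-(π - t))..(π - t),
      (Real.log (Complex.abs ((b₂ : ℂ) + (a₂ : ℂ) * Complex.exp (θ * Complex.I)))
        - Real.log (Complex.abs ((a₁ : ℂ) - (b₁ : ℂ) * Complex.exp (θ * Complex.I)))))
      = (∫ θ in (-(π - t))..(π - t),
          Real.log (Complex.abs ((b₂ : ℂ) + (a₂ : ℂ) * Complex.exp (θ * Complex.I))))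
        - ∫ θ in (-(π - t))..(π - t),
            Real.log (Complex.abs ((a₁ : ℂ) - (b₁ : ℂ) * Complex.exp (θ * Complex.I))) :=
    intervalIntegral.integral_sub (pq_int b₂ a₂ _ _) (pqm_int a₁ b₁ _ _)
  have maxval : (a₁ + b₁ + |a₁ - b₁|) / 2 = max a₁ b₁ := by
    rcases le_total a₁ b₁ with h5 | h5
    · rw [abs_of_nonpos (by linarith), max_eq_right h5]; ring
    · rw [abs_of_nonneg (by linarith), max_eq_left h5]; ring
  rw [step1, step2, step3, maxval, RHSsplit]
  linear_combination (-(2*π)) * split4b + (-(2*π)) * split4a + (2*π) * mid_eq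
    + (2*π) * tail_eq + (2*π) * tailneg_eq + (2*π) * splitHa + (2*π) * splitHb
    + (2*π) * FC + (-(2*π)) * eH1 + (-(4*π)) * eH2 + (2*π) * eH3 + (-(2*π)) * eH4
    + (2*π) * eS1 + (4*π) * eS2 + (-(2*π)) * eS3 + (2*π) * eS4
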